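/- Under the same compact-support hypothesis, the quantity Σ_{n∈ℤ} [b(n,t)² + 2a(n,t)² − 1/2] is conserved for the Toda lattice in Flaschka variables. -/

import Mathlib

/-- For the Toda lattice in Flaschka variables with `a(n,t) = 1/2`, `b(n,t) = 0`
for `|n| ≥ M`, the quantity `Σ_n [b(n,t)² + 2a(n,t)² − 1/2]` is conserved. -/
theorem flaschka_energy_conserved
    (a b : ℤ → ℝ → ℝ)
    (hb : ∀ n t, HasDerivAt (b n) (2 * ((a n t)^2 - (a (n - 1) t)^2)) t)
    (ha : ∀ n t, HasDerivAt (a n) (a n t * (b (n + 1) t - b n t)) t)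
    (M : ℤ)
    (hsupp : ∀ (t : ℝ) (n : ℤ), M ≤ |n| → a n t = 1/2 ∧ b n t = 0) :
    ∀ t : ℝ,
      HasDerivAt (fun s : ℝ => ∑' n : ℤ, ((b n s)^2 + 2 * (a n s)^2 - 1/2)) 0 t := by
  intro t
  set S : Finset ℤ := Finset.Icc (-M) M with hS
  have hfz : ∀ s : ℝ, ∀ n ∉ S, (b n s)^2 + 2 * (a n s)^2 - 1/2 = 0 := by
    intro s n hn
    have hn' : M ≤ |n| := by
      simp only [hS, Finset.mem_Icc, not_and_or, not_le] at hn
      rcases abs_cases n with ⟨he, _⟩ | ⟨he, _⟩ <;> omega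
    obtain ⟨ha0, hb0⟩ := hsupp s n hn'
    rw [ha0, hb0]; norm_num
  have hfun : (fun s : ℝ => ∑' n : ℤ, ((b n s)^2 + 2 * (a n s)^2 - 1/2))
      = fun s => ∑ n ∈ S, ((b n s)^2 + 2 * (a n s)^2 - 1/2) := by
    funext s
    exact tsum_eq_sum (hfz s)
  rw [hfun]
  set D : ℤ → ℝ := fun n =>
    2 * b n t * (2 * ((a n t)^2 - (a (n - 1) t)^2))
      + 2 * (2 * a n t * (a n t * (b (n + 1) t - b n t))) with hDdef
  have hterm : ∀ n : ℤ,
      HasDerivAt (fun s => (b n s)^2 + 2 * (a n s)^2 - 1/2) (D n) t := by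
    intro n
    have h1 : HasDerivAt (fun s => (b n s)^2)
        (2 * b n t * (2 * ((a n t)^2 - (a (n - 1) t)^2))) t := by
      have := (hb n t).fun_pow 2
      refine this.congr_deriv ?_
      push_cast
      ring
    have h2 : HasDerivAt (fun s => 2 * (a n s)^2)
        (2 * (2 * a n t * (a n t * (b (n + 1) t - b n t)))) t := by
      have := ((ha n t).fun_pow 2).const_mul 2
      refine this.congr_deriv ?_
      push_cast
      ring
    exact (h1.add h2).sub_const (1/2)
  have hsum : HasDerivAt (fun s => ∑ n ∈ S, ((b n s)^2 + 2 * (a n s)^2 - 1/2))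
      (∑ n ∈ S, D n) t := HasDerivAt.fun_sum fun n _ => hterm n
  have hzero : ∑ n ∈ S, D n = 0 := by
    set g : ℤ → ℝ := fun n => (a (n - 1) t)^2 * b n t with hg
    have hgz : ∀ n : ℤ, M ≤ |n| → g n = 0 := by
      intro n hn
      simp [hg, (hsupp t n hn).2]
    have hD : ∀ n : ℤ, D n = 4 * g (n + 1) - 4 * g n := by
      intro n
      have hn1 : n + 1 - 1 = n := by ring
      simp only [hDdef, hg, hn1]
      ring
    rw [Finset.sum_congr rfl (fun n _ => hD n), Finset.sum_sub_distrib]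
    have key : ∑ n ∈ S, g (n + 1) = ∑ n ∈ S, g n := by
      have himg : ∑ n ∈ S, g (n + 1) = ∑ m ∈ Finset.Icc (-M + 1) (M + 1), g m := by
        rw [show Finset.Icc (-M + 1) (M + 1) = S.image (· + 1) by
          rw [hS, Finset.image_add_right_Icc]]
        rw [Finset.sum_image (by intro x _ y _ h; exact add_right_cancel h)]
      have h1 : ∑ m ∈ Finset.Icc (-M + 1) (M + 1), g m
          = ∑ m ∈ Finset.Icc (-M) (M + 1), g m := by
        apply Finset.sum_subset
        · intro x hx; simp only [Finset.mem_Icc] at hx ⊢; omega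
        · intro x hx hx'
          simp only [Finset.mem_Icc, not_and_or, not_le] at hx hx'
          apply hgz
          rcases abs_cases x with ⟨he, _⟩ | ⟨he, _⟩ <;> omega
      have h2 : ∑ m ∈ S, g m = ∑ m ∈ Finset.Icc (-M) (M + 1), g m := by
        apply Finset.sum_subset
        · intro x hx; simp only [hS, Finset.mem_Icc] at hx ⊢; omega
        · intro x hx hx'
          simp only [hS, Finset.mem_Icc, not_and_or, not_le] at hx hx'
          apply hgz
          rcases abs_cases x with ⟨he, _⟩ | ⟨he, _⟩ <;> omega
      rw [himg, h1, h2]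
    rw [← Finset.mul_sum, ← Finset.mul_sum, key, sub_self]
  rw [hzero] at hsum
  exact hsum
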